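/- Let Γ be a 2×2 diagonal matrix with positive diagonal entries γ1 ≥ γ2 > 0, and set g = (γ1 γ2)^(1/2). Then the 2×2 real matrix S with first column (sqrt((g²-γ2²)/(γ1²-γ2²)), sqrt((γ1²-g²)/(γ1²-γ2²)))ᵀ (interpreted appropriately when γ1=γ2) is orthogonal, and Γ·S admits a QR decomposition Γ·S = Q·R with R upper triangular having both diagonal entries equal to g. -/

import Mathlib

open Matrix

/-- Base case (M=2) of the equal-diagonal R-factor lemma: for
`Γ = diag(γ1, γ2)` with `γ1 ≥ γ2 > 0` and `g = √(γ1 γ2)`, there is an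
orthogonal `S` whose first column is the stated one (when `γ1 ≠ γ2`), such that
`Γ S = Q R` with `Q` orthogonal and `R` upper triangular with both diagonal
entries equal to `g`. -/
theorem stmt1 (γ1 γ2 : ℝ) (h12 : γ2 ≤ γ1) (h2 : 0 < γ2) :
    ∃ S Q R : Matrix (Fin 2) (Fin 2) ℝ,
      Sᵀ * S = 1 ∧
      (γ1 ≠ γ2 →
        S 0 0 = Real.sqrt ((γ1 * γ2 - γ2 ^ 2) / (γ1 ^ 2 - γ2 ^ 2)) ∧
        S 1 0 = Real.sqrt ((γ1 ^ 2 - γ1 * γ2) / (γ1 ^ 2 - γ2 ^ 2))) ∧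
      Qᵀ * Q = 1 ∧
      R 1 0 = 0 ∧
      R 0 0 = Real.sqrt (γ1 * γ2) ∧ R 1 1 = Real.sqrt (γ1 * γ2) ∧
      Matrix.diagonal ![γ1, γ2] * S = Q * R := by
  have h1 : 0 < γ1 := lt_of_lt_of_le h2 h12
  have ht : 0 < γ1 + γ2 := by linarith
  obtain ⟨c, hc_def⟩ : ∃ x, Real.sqrt (γ2 / (γ1 + γ2)) = x := ⟨_, rfl⟩
  obtain ⟨s, hs_def⟩ : ∃ x, Real.sqrt (γ1 / (γ1 + γ2)) = x := ⟨_, rfl⟩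
  obtain ⟨g, hg_def⟩ : ∃ x, Real.sqrt (γ1 * γ2) = x := ⟨_, rfl⟩
  have hc2 : c ^ 2 = γ2 / (γ1 + γ2) := by rw [← hc_def]; exact Real.sq_sqrt (by positivity)
  have hs2 : s ^ 2 = γ1 / (γ1 + γ2) := by rw [← hs_def]; exact Real.sq_sqrt (by positivity)
  have hg2 : g ^ 2 = γ1 * γ2 := by rw [← hg_def]; exact Real.sq_sqrt (by positivity)
  have hg : 0 < g := by rw [← hg_def]; exact Real.sqrt_pos.mpr (by positivity)
  have hgne : g ≠ 0 := ne_of_gt hg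
  have htne : (γ1 + γ2) ≠ 0 := ne_of_gt ht
  have hone : c ^ 2 + s ^ 2 = 1 := by
    rw [hc2, hs2, ← add_div, add_comm, div_self htne]
  have eA : γ1 ^ 2 * c ^ 2 + γ2 ^ 2 * s ^ 2 = g ^ 2 := by
    rw [hc2, hs2, hg2]; field_simp
  have eE : -(γ1 * s * g ^ 2) = γ1 * s * c ^ 2 * (γ2 ^ 2 - γ1 ^ 2) - γ2 * s * g ^ 2 := by
    rw [hc2, hg2]; field_simp; ring
  have eF : γ2 * c * g ^ 2 = γ2 * c * s ^ 2 * (γ2 ^ 2 - γ1 ^ 2) + γ1 * c * g ^ 2 := by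
    rw [hs2, hg2]; field_simp; ring
  refine ⟨!![c, -s; s, c], !![γ1*c/g, -(γ2*s/g); γ2*s/g, γ1*c/g],
      !![g, s*c*(γ2^2-γ1^2)/g; 0, g], ?_, ?_, ?_, ?_, ?_, ?_, ?_⟩
  · ext i j
    fin_cases i <;> fin_cases j <;>
      simp [Matrix.mul_apply, Fin.sum_univ_two, Matrix.one_apply, Matrix.vecHead,
        Matrix.vecTail] <;>
      first | ring1 | linear_combination hone | linear_combination -hone
  · intro hne
    have hlt : γ2 < γ1 := lt_of_le_of_ne h12 (Ne.symm hne)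
    constructor
    · show c = _
      rw [← hc_def]
      congr 1
      rw [div_eq_div_iff htne (ne_of_gt (by nlinarith) : γ1 ^ 2 - γ2 ^ 2 ≠ 0)]
      ring
    · show s = _
      rw [← hs_def]
      congr 1
      rw [div_eq_div_iff htne (ne_of_gt (by nlinarith) : γ1 ^ 2 - γ2 ^ 2 ≠ 0)]
      ring
  · ext i j
    fin_cases i <;> fin_cases j <;>
      simp [Matrix.mul_apply, Fin.sum_univ_two, Matrix.one_apply, Matrix.vecHead,
        Matrix.vecTail] <;>
      field_simp <;> (first | ring1 | linear_combination eA | linear_combination -eA)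
  · simp
  · simp [← hg_def]
  · simp [← hg_def]
  · ext i j
    fin_cases i <;> fin_cases j <;>
      simp [Matrix.mul_apply, Fin.sum_univ_two, Matrix.diagonal, Matrix.vecHead,
        Matrix.vecTail] <;>
      field_simp <;>
        first
          | ring1
          | linear_combination eE
          | linear_combination -eE
          | linear_combination eF
          | linear_combination -eF
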